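/- arXiv:math/0603330 — 2 statements merged into one kernel-verified Lean document; each statement's English description precedes it below -/
import Mathlib

section
/- Let F ∈ L_γ, γ > 0, with φ_F(γ) < ∞. Then for every γ′ ∈ (0,γ), uniformly in n ≥ 1 and a ≤ −1, P(S_{n−1} ≤ a, S_n > x) ≤ (1 + o(1)) e^{γ′ a} F̄(x) as x → ∞. -/
open MeasureTheory Filter Set

/-- The tail distribution function of a probability measure on ℝ. -/
noncomputable def tail (μ : Measure ℝ) (x : ℝ) : ℝ := (μ (Set.Ioi x)).toReal

/-- The exponential moment `φ_F(α) = ∫ e^{αx} dF(x)`, valued in `[0,∞]`. -/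
noncomputable def expMoment (μ : Measure ℝ) (α : ℝ) : ENNReal :=
  ∫⁻ x, ENNReal.ofReal (Real.exp (α * x)) ∂μ

/-- The class `L_γ`: positive tail, and `F̄(x-k)/F̄(x) → e^{γ k}` for every fixed `k`. -/
def MemL (μ : Measure ℝ) (γ : ℝ) : Prop :=
  (∀ x, 0 < tail μ x) ∧
  ∀ k : ℝ, Tendsto (fun x => tail μ (x - k) / tail μ x) atTop (nhds (Real.exp (γ * k)))

lemma tail_anti (μ : Measure ℝ) [IsFiniteMeasure μ] : Antitone (tail μ) := by
  intro x y hxy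
  exact ENNReal.toReal_mono (measure_ne_top _ _) (measure_mono (Set.Ioi_subset_Ioi hxy))

lemma uniform_tail (μ : Measure ℝ) [IsProbabilityMeasure μ] {γ γ' : ℝ}
    (hγ' : 0 < γ') (hlt : γ' < γ) (hL : MemL μ γ) {ε : ℝ} (hε : 0 < ε) :
    ∃ x₁ : ℝ, ∀ x ≥ x₁, ∀ t ≥ (1:ℝ),
      tail μ (x + t) ≤ (1 + ε) * Real.exp (-(γ' * t)) * tail μ x := by
  have hγ : 0 < γ := hγ'.trans hlt
  set h : ℝ := min 1 ((γ - γ') / (2 * γ)) with hh_def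
  have hh : 0 < h := lt_min one_pos (div_pos (sub_pos.2 hlt) (by positivity))
  have h2 : h ≤ (γ - γ') / (2 * γ) := min_le_right _ _
  have hhγ : h * (γ + γ') ≤ γ - γ' := by
    have h3 : h * (2 * γ) ≤ γ - γ' := by
      rw [← le_div_iff₀ (by positivity)]; exact h2
    nlinarith [hh.le, hlt.le, hγ'.le]
  set ρ : ℝ := Real.exp (-(h * (γ + γ') / 2)) with hρ_def
  have hρpos : 0 < ρ := Real.exp_pos _
  have hρ : Real.exp (γ * (-h)) < ρ := by
    apply Real.exp_lt_exp.2
    nlinarith [mul_pos hh (sub_pos.2 hlt)]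
  have hev : ∀ᶠ y in atTop, tail μ (y - (-h)) / tail μ y < ρ :=
    Filter.Tendsto.eventually_lt_const hρ (hL.2 (-h))
  obtain ⟨x₁, hx₁⟩ := eventually_atTop.1 hev
  have step : ∀ y ≥ x₁, tail μ (y + h) ≤ ρ * tail μ y := by
    intro y hy
    have := hx₁ y hy
    rw [sub_neg_eq_add] at this
    exact le_of_lt ((div_lt_iff₀ (hL.1 y)).1 this)
  have iter : ∀ j : ℕ, ∀ x ≥ x₁, tail μ (x + j * h) ≤ ρ ^ j * tail μ x := by
    intro j
    induction j with
    | zero => intro x hx; simp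
    | succ j ih =>
      intro x hx
      have h1 : x + (j + 1 : ℕ) * h = (x + j * h) + h := by
        push_cast; ring
      rw [h1]
      have h2 : tail μ ((x + j * h) + h) ≤ ρ * tail μ (x + j * h) :=
        step _ (by nlinarith [Nat.cast_nonneg (α := ℝ) j, hh.le])
      calc tail μ ((x + j * h) + h) ≤ ρ * tail μ (x + j * h) := h2
        _ ≤ ρ * (ρ ^ j * tail μ x) := by
            exact mul_le_mul_of_nonneg_left (ih x hx) hρpos.le
        _ = ρ ^ (j + 1) * tail μ x := by ring
  refine ⟨x₁, fun x hx t ht => ?_⟩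
  have ht0 : (0:ℝ) < t := lt_of_lt_of_le one_pos ht
  set m : ℕ := ⌊t / h⌋₊ with hm_def
  have hm1 : (m : ℝ) * h ≤ t := by
    rw [← le_div_iff₀ hh]
    exact Nat.floor_le (by positivity)
  have hm2 : t < ((m : ℝ) + 1) * h := by
    rw [← div_lt_iff₀ hh]
    exact_mod_cast Nat.lt_floor_add_one (t / h)
  have hmono : tail μ (x + t) ≤ tail μ (x + m * h) := tail_anti μ (by linarith)
  have hiter := iter m x hx
  have hexp : ρ ^ m ≤ (1 + ε) * Real.exp (-(γ' * t)) := by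
    have key : γ' * t ≤ (m : ℝ) * (h * (γ + γ') / 2) := by
      nlinarith [hm2, hhγ, ht, hh.le, hγ'.le, Nat.cast_nonneg (α := ℝ) m,
        mul_pos hγ' ht0, sub_nonneg.2 hlt.le]
    have e1 : ρ ^ m = Real.exp ((m : ℝ) * (-(h * (γ + γ') / 2))) := by
      rw [Real.exp_nat_mul]
    rw [e1]
    calc Real.exp ((m : ℝ) * (-(h * (γ + γ') / 2))) ≤ Real.exp (-(γ' * t)) := by
          apply Real.exp_le_exp.2; nlinarith [key]
      _ ≤ (1 + ε) * Real.exp (-(γ' * t)) := by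
          nlinarith [Real.exp_pos (-(γ' * t)), hε]
  have htail_nonneg : 0 ≤ tail μ x := (hL.1 x).le
  calc tail μ (x + t) ≤ ρ ^ m * tail μ x := hmono.trans hiter
    _ ≤ ((1 + ε) * Real.exp (-(γ' * t))) * tail μ x :=
        mul_le_mul_of_nonneg_right hexp htail_nonneg
    _ = (1 + ε) * Real.exp (-(γ' * t)) * tail μ x := by ring

theorem joint_tail_uniform_bound {Ω : Type*} [MeasurableSpace Ω]
    (ℙ : Measure Ω) [IsProbabilityMeasure ℙ]
    (μ : Measure ℝ) [IsProbabilityMeasure μ]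
    (ξ : ℕ → Ω → ℝ) (hmeas : ∀ i, Measurable (ξ i))
    (hindep : ProbabilityTheory.iIndepFun ξ ℙ)
    (hdist : ∀ i, Measure.map (ξ i) ℙ = μ)
    (S : ℕ → Ω → ℝ) (hS : ∀ n ω, S n ω = ∑ i ∈ Finset.range n, ξ i ω)
    (γ : ℝ) (hγ : 0 < γ) (hL : MemL μ γ) (hφ : expMoment μ γ < ⊤) :
    ∀ γ' ∈ Set.Ioo 0 γ, ∀ ε > (0 : ℝ), ∃ x₀ : ℝ, ∀ x ≥ x₀,
      ∀ n : ℕ, 1 ≤ n → ∀ a ≤ (-1 : ℝ),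
        (ℙ {ω | S (n - 1) ω ≤ a ∧ x < S n ω}).toReal ≤
          (1 + ε) * Real.exp (γ' * a) * tail μ x := by
  intro γ' hγ' ε hε
  obtain ⟨x₁, hx₁⟩ := uniform_tail μ hγ'.1 hγ'.2 hL hε
  refine ⟨x₁, fun x hx n hn a ha => ?_⟩
  obtain ⟨k, rfl⟩ : ∃ k, n = k + 1 := ⟨n - 1, (Nat.succ_pred_eq_of_pos hn).symm⟩
  simp only [Nat.add_sub_cancel]
  have hsub : {ω | S k ω ≤ a ∧ x < S (k + 1) ω} ⊆ ξ k ⁻¹' Set.Ioi (x - a) := by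
    rintro ω ⟨h1, h2⟩
    have hSk : S (k + 1) ω = S k ω + ξ k ω := by
      rw [hS (k + 1) ω, Finset.sum_range_succ, ← hS k ω]
    simp only [Set.mem_preimage, Set.mem_Ioi]
    have : x < S k ω + ξ k ω := hSk ▸ h2
    linarith
  have hle : ℙ {ω | S k ω ≤ a ∧ x < S (k + 1) ω} ≤ μ (Set.Ioi (x - a)) := by
    calc ℙ {ω | S k ω ≤ a ∧ x < S (k + 1) ω} ≤ ℙ (ξ k ⁻¹' Set.Ioi (x - a)) :=
          measure_mono hsub
      _ = μ (Set.Ioi (x - a)) := by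
          rw [← hdist k, Measure.map_apply (hmeas k) measurableSet_Ioi]
  have h1 : (ℙ {ω | S k ω ≤ a ∧ x < S (k + 1) ω}).toReal ≤ tail μ (x - a) :=
    ENNReal.toReal_mono (measure_ne_top μ _) hle
  have h2 := hx₁ x hx (-a) (by linarith)
  rw [show x + -a = x - a by ring] at h2
  rw [show -(γ' * -a) = γ' * a by ring] at h2
  linarith
end

section
/- Suppose F ∈ S_γ for some γ ≥ 0 (so F ∈ L_γ, φ_F(γ) < ∞, and F̄^{*2}(x) ∼ 2φ_F(γ)F̄(x)). Then for every n ≥ 1, the n-fold convolution satisfies F̄^{*n}(x) ∼ n φ_F(γ)^{n−1} F̄(x) as x → ∞. -/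
open MeasureTheory Filter Set

/-- `n`-fold convolution of a measure on ℝ with itself. -/
noncomputable def nconv (μ : Measure ℝ) : ℕ → Measure ℝ
  | 0 => Measure.dirac 0
  | n + 1 => (nconv μ n).conv μ

/-- The class `S_γ`: `F ∈ L_γ`, `φ_F(γ) < ∞`, and `F̄^{*2}(x) ∼ 2 φ_F(γ) F̄(x)`. -/
def MemS (μ : Measure ℝ) (γ : ℝ) : Prop :=
  MemL μ γ ∧ expMoment μ γ < ⊤ ∧
  Tendsto (fun x => tail (nconv μ 2) x / tail μ x) atTop
    (nhds (2 * (expMoment μ γ).toReal))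

set_option linter.unusedSectionVars false
set_option linter.unusedVariables false
set_option maxHeartbeats 1000000

section Basic
variable (μ : Measure ℝ) [IsFiniteMeasure μ]

lemma tail_nonneg (x : ℝ) : 0 ≤ tail μ x := ENNReal.toReal_nonneg

lemma tail_antitone : Antitone (tail μ) := fun a b hab =>
  ENNReal.toReal_mono (measure_ne_top μ _) (measure_mono (Ioi_subset_Ioi hab))

lemma measurable_tail : Measurable (tail μ) := (tail_antitone μ).measurable

lemma measure_Ioi_eq (x : ℝ) : μ (Set.Ioi x) = ENNReal.ofReal (tail μ x) :=
  (ENNReal.ofReal_toReal (measure_ne_top μ _)).symm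

lemma tail_le_one [IsProbabilityMeasure μ] (x : ℝ) : tail μ x ≤ 1 := by
  rw [tail, ← ENNReal.toReal_one]
  exact ENNReal.toReal_mono ENNReal.one_ne_top prob_le_one

lemma nconv_one : nconv μ 1 = μ := by
  show (Measure.dirac 0).conv μ = μ
  simp

lemma nconv_two : nconv μ 2 = μ.conv μ := by
  show ((nconv μ 1).conv μ) = μ.conv μ
  rw [nconv_one]

instance isProb_nconv (ν : Measure ℝ) [IsProbabilityMeasure ν] (n : ℕ) :
    IsProbabilityMeasure (nconv ν n) := by
  induction n with
  | zero => exact Measure.dirac.isProbabilityMeasure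
  | succ n ih => exact MeasureTheory.Measure.probabilitymeasure_of_probabilitymeasures_conv _ _

end Basic

lemma expMoment_dirac0 (α : ℝ) : expMoment (Measure.dirac 0) α = 1 := by
  rw [expMoment, lintegral_dirac]
  simp

lemma expMoment_conv (ν μ : Measure ℝ) [SFinite ν] [SFinite μ] (α : ℝ) :
    expMoment (ν.conv μ) α = expMoment ν α * expMoment μ α := by
  rw [expMoment, Measure.conv, lintegral_map (by fun_prop) (by fun_prop)]
  have : ∀ p : ℝ × ℝ, ENNReal.ofReal (Real.exp (α * (p.1 + p.2)))
      = ENNReal.ofReal (Real.exp (α * p.1)) * ENNReal.ofReal (Real.exp (α * p.2)) := by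
    intro p
    rw [← ENNReal.ofReal_mul (Real.exp_nonneg _), ← Real.exp_add, mul_add]
  simp_rw [this]
  exact lintegral_prod_mul (f := fun a => ENNReal.ofReal (Real.exp (α * a)))
    (g := fun a => ENNReal.ofReal (Real.exp (α * a)))
    (Measurable.aemeasurable (by fun_prop)) (Measurable.aemeasurable (by fun_prop))

instance sfinite_nconv (μ : Measure ℝ) [SFinite μ] (n : ℕ) : SFinite (nconv μ n) := by
  induction n with
  | zero => exact inferInstanceAs (SFinite (Measure.dirac (0:ℝ)))
  | succ n ih => exact inferInstanceAs (SFinite ((nconv μ n).conv μ))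

lemma expMoment_nconv (μ : Measure ℝ) [SFinite μ] (α : ℝ) (n : ℕ) :
    expMoment (nconv μ n) α = (expMoment μ α) ^ n := by
  induction n with
  | zero => simpa [nconv] using expMoment_dirac0 α
  | succ n ih =>
    show expMoment ((nconv μ n).conv μ) α = _
    rw [expMoment_conv, ih, pow_succ]

/-- The exponential-tilt measure. -/
noncomputable def expM (σ : Measure ℝ) (γ : ℝ) : Measure ℝ :=
  σ.withDensity (fun y => ENNReal.ofReal (Real.exp (γ * y)))

lemma expM_univ (σ : Measure ℝ) (γ : ℝ) : expM σ γ Set.univ = expMoment σ γ := by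
  rw [expM, withDensity_apply _ MeasurableSet.univ, expMoment, setLIntegral_univ]

lemma expM_finite (σ : Measure ℝ) (γ : ℝ) (h : expMoment σ γ < ⊤) :
    IsFiniteMeasure (expM σ γ) :=
  ⟨by rw [expM_univ]; exact h⟩

lemma integral_Iic_exp (σ : Measure ℝ) [IsFiniteMeasure σ] (γ : ℝ) (T : ℝ) :
    ∫ y in Iic T, Real.exp (γ * y) ∂σ = ((expM σ γ) (Iic T)).toReal := by
  rw [integral_eq_lintegral_of_nonneg_ae (ae_of_all _ fun y => (Real.exp_pos _).le)
    (Measurable.aestronglyMeasurable (by fun_prop))]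
  rw [expM, withDensity_apply _ measurableSet_Iic]

lemma expM_Iic_add_Ioi (σ : Measure ℝ) (γ : ℝ) (T : ℝ) :
    expM σ γ (Iic T) + expM σ γ (Ioi T) = expMoment σ γ := by
  rw [← expM_univ σ γ, ← measure_union (Iic_disjoint_Ioi le_rfl) measurableSet_Ioi,
    Iic_union_Ioi]

lemma tendsto_expM_Ioi (σ : Measure ℝ) (γ : ℝ) (h : expMoment σ γ < ⊤) :
    Tendsto (fun T : ℝ => ((expM σ γ) (Ioi T)).toReal) atTop (nhds 0) := by
  have h0 : Tendsto (fun T : ℝ => (expM σ γ) (Ioi T)) atTop (nhds 0) := by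
    have := tendsto_measure_iInter_atTop (μ := expM σ γ) (s := fun T : ℝ => Ioi T)
      (fun T => measurableSet_Ioi.nullMeasurableSet)
      (fun a b hab => Ioi_subset_Ioi hab)
      ⟨0, by
        refine ne_top_of_le_ne_top h.ne ?_
        rw [← expM_univ σ γ]
        exact measure_mono (subset_univ _)⟩
    have hempty : ⋂ T : ℝ, Ioi T = (∅ : Set ℝ) := by
      ext x; simp only [mem_iInter, mem_Ioi, mem_empty_iff_false, iff_false, not_forall, not_lt]
      exact ⟨x, le_rfl⟩
    rw [hempty, measure_empty] at this
    exact this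
  exact (ENNReal.tendsto_toReal (by simp)).comp h0

/-- Dominated convergence for the ratio of a shifted integral to the tail. -/
lemma dct (μ : Measure ℝ) [IsFiniteMeasure μ] (γ : ℝ)
    (hpos : ∀ x, 0 < tail μ x)
    (hL : ∀ k : ℝ, Tendsto (fun x => tail μ (x - k) / tail μ x) atTop (nhds (Real.exp (γ * k))))
    (σ : Measure ℝ) [IsFiniteMeasure σ] (g : ℝ → ℝ) (hg0 : ∀ y, 0 ≤ g y)
    (hgm : Measurable g) (c K : ℝ) (hK : ∀ u, g u ≤ K * tail μ u)
    (hc : Tendsto (fun x => g x / tail μ x) atTop (nhds c)) (T : ℝ) :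
    Tendsto (fun x => (∫ y in Iic T, g (x - y) ∂σ) / tail μ x) atTop
      (nhds (c * ∫ y in Iic T, Real.exp (γ * y) ∂σ)) := by
  have hK0 : 0 ≤ K := by
    have h1 : 0 ≤ K * tail μ 0 := le_trans (hg0 0) (hK 0)
    nlinarith [hpos 0]
  rw [← integral_const_mul]
  simp_rw [← integral_div]
  apply tendsto_integral_filter_of_dominated_convergence
    (bound := fun _ => K * (Real.exp (γ * T) + 1))
  · filter_upwards with x
    exact ((hgm.comp (measurable_const.sub measurable_id)).div_const _).aestronglyMeasurable
  · have hev : ∀ᶠ x in atTop, tail μ (x - T) / tail μ x < Real.exp (γ * T) + 1 :=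
      (hL T).eventually_lt_const (by linarith [Real.exp_pos (γ * T)])
    filter_upwards [hev] with x hx
    rw [ae_restrict_iff' measurableSet_Iic]
    filter_upwards with y hy
    rw [Real.norm_eq_abs, abs_of_nonneg (div_nonneg (hg0 _) (hpos x).le)]
    calc g (x - y) / tail μ x ≤ (K * tail μ (x - T)) / tail μ x := by
          have hnum : g (x - y) ≤ K * tail μ (x - T) :=
            le_trans (hK _) (mul_le_mul_of_nonneg_left
              (tail_antitone μ (by simp at hy; linarith)) hK0)
          gcongr
          exact (hpos x).le
      _ = K * (tail μ (x - T) / tail μ x) := mul_div_assoc _ _ _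
      _ ≤ K * (Real.exp (γ * T) + 1) := mul_le_mul_of_nonneg_left hx.le hK0
  · exact integrable_const _
  · filter_upwards with y
    have h1 : Tendsto (fun x : ℝ => g (x - y) / tail μ (x - y)) atTop (nhds c) := by
      apply hc.comp
      simpa [sub_eq_add_neg] using tendsto_atTop_add_const_right atTop (-y) tendsto_id
    have h2 := hL y
    have h3 := h1.mul h2
    apply h3.congr
    intro x
    rw [div_mul_div_comm, mul_comm (g (x - y)), mul_div_mul_left _ _ (ne_of_gt (hpos (x - y)))]

section Sections
variable (ρ σ : Measure ℝ) [SFinite ρ] [SFinite σ]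

lemma prod_section_fst (s : Set ℝ) (hs : MeasurableSet s) (u : ℝ → ℝ) (hu : Measurable u) :
    (ρ.prod σ) {p : ℝ × ℝ | p.1 ∈ s ∧ u p.1 < p.2} = ∫⁻ z in s, σ (Ioi (u z)) ∂ρ := by
  have hS : MeasurableSet {p : ℝ × ℝ | p.1 ∈ s ∧ u p.1 < p.2} := by
    apply MeasurableSet.inter
    · exact measurable_fst hs
    · exact measurableSet_lt (hu.comp measurable_fst) measurable_snd
  rw [Measure.prod_apply hS]
  rw [← lintegral_indicator hs]
  congr 1
  ext z
  by_cases hz : z ∈ s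
  · rw [Set.indicator_of_mem hz]
    congr 1
    ext w
    simp [hz, Set.mem_Ioi]
  · rw [Set.indicator_of_notMem hz]
    have : (Prod.mk z ⁻¹' {p : ℝ × ℝ | p.1 ∈ s ∧ u p.1 < p.2}) = ∅ := by
      ext w; simp [hz]
    rw [this, measure_empty]

lemma prod_section_snd (s : Set ℝ) (hs : MeasurableSet s) (u : ℝ → ℝ) (hu : Measurable u) :
    (ρ.prod σ) {p : ℝ × ℝ | p.2 ∈ s ∧ u p.2 < p.1} = ∫⁻ y in s, ρ (Ioi (u y)) ∂σ := by
  have := prod_section_fst σ ρ s hs u hu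
  rw [← this, ← Measure.prod_swap]
  rw [Measure.map_apply measurable_swap]
  · congr 1
  · apply MeasurableSet.inter
    · exact measurable_snd hs
    · exact measurableSet_lt (hu.comp measurable_snd) measurable_fst

end Sections

def Aset (x : ℝ) : Set (ℝ × ℝ) := {p | x < p.1 + p.2}
def S1 (T x : ℝ) : Set (ℝ × ℝ) := {p | p.2 ∈ Iic T ∧ x - p.2 < p.1}
def S2 (T x : ℝ) : Set (ℝ × ℝ) := {p | p.1 ∈ Iic T ∧ x - p.1 < p.2}
def S3 (T x : ℝ) : Set (ℝ × ℝ) := {p | p.2 ∈ Ioi T ∧ max T (x - p.2) < p.1}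

lemma S1_subset (T x : ℝ) : S1 T x ⊆ Aset x := fun p hp => by
  simp only [S1, mem_setOf_eq] at hp; simp only [Aset, mem_setOf_eq]; linarith [hp.2]

lemma S2_subset (T x : ℝ) : S2 T x ⊆ Aset x := fun p hp => by
  simp only [S2, mem_setOf_eq] at hp; simp only [Aset, mem_setOf_eq]; linarith [hp.2]

lemma S3_subset (T x : ℝ) : S3 T x ⊆ Aset x := fun p hp => by
  simp only [S3, mem_setOf_eq, mem_Ioi, max_lt_iff] at hp
  simp only [Aset, mem_setOf_eq]; linarith [hp.2.2]

lemma cover (T x : ℝ) : Aset x ⊆ S1 T x ∪ S2 T x ∪ S3 T x := by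
  intro p hp
  simp only [Aset, mem_setOf_eq] at hp
  by_cases h1 : p.2 ≤ T
  · left; left; exact ⟨h1, by linarith⟩
  · by_cases h2 : p.1 ≤ T
    · left; right; exact ⟨h2, by linarith⟩
    · right
      refine ⟨lt_of_not_ge h1, ?_⟩
      simp only [max_lt_iff]
      exact ⟨lt_of_not_ge h2, by linarith⟩

lemma disj12 (T x : ℝ) (h : 2 * T ≤ x) : Disjoint (S1 T x) (S2 T x) := by
  rw [Set.disjoint_left]
  rintro p ⟨h1, h2⟩ ⟨h3, h4⟩
  simp only [mem_Iic] at h1 h3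
  linarith

lemma disj13 (T x : ℝ) : Disjoint (S1 T x) (S3 T x) := by
  rw [Set.disjoint_left]
  rintro p ⟨h1, -⟩ ⟨h3, -⟩
  simp only [mem_Iic] at h1; simp only [mem_Ioi] at h3
  linarith

lemma disj23 (T x : ℝ) : Disjoint (S2 T x) (S3 T x) := by
  rw [Set.disjoint_left]
  rintro p ⟨h1, -⟩ ⟨-, h4⟩
  simp only [mem_Iic] at h1
  simp only [max_lt_iff] at h4
  linarith [h4.1]

lemma meas_S1 (ρ σ : Measure ℝ) [SFinite ρ] [SFinite σ] (T x : ℝ) :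
    (ρ.prod σ) (S1 T x) = ∫⁻ y in Iic T, ρ (Ioi (x - y)) ∂σ :=
  prod_section_snd ρ σ (Iic T) measurableSet_Iic (fun y => x - y) (by fun_prop)

lemma meas_S2 (ρ σ : Measure ℝ) [SFinite ρ] [SFinite σ] (T x : ℝ) :
    (ρ.prod σ) (S2 T x) = ∫⁻ z in Iic T, σ (Ioi (x - z)) ∂ρ :=
  prod_section_fst ρ σ (Iic T) measurableSet_Iic (fun z => x - z) (by fun_prop)

lemma meas_S3 (ρ σ : Measure ℝ) [SFinite ρ] [SFinite σ] (T x : ℝ) :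
    (ρ.prod σ) (S3 T x) = ∫⁻ y in Ioi T, ρ (Ioi (max T (x - y))) ∂σ :=
  prod_section_snd ρ σ (Ioi T) measurableSet_Ioi (fun y => max T (x - y)) (by fun_prop)

lemma measurable_S1 (T x : ℝ) : MeasurableSet (S1 T x) :=
  (measurable_snd measurableSet_Iic).inter
    (measurableSet_lt ((measurable_const.sub measurable_id).comp measurable_snd) measurable_fst)

lemma measurable_S2 (T x : ℝ) : MeasurableSet (S2 T x) :=
  (measurable_fst measurableSet_Iic).inter
    (measurableSet_lt ((measurable_const.sub measurable_id).comp measurable_fst) measurable_snd)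

lemma measurable_S3 (T x : ℝ) : MeasurableSet (S3 T x) :=
  (measurable_snd measurableSet_Ioi).inter
    (measurableSet_lt ((measurable_const.max (measurable_const.sub measurable_id)).comp
      measurable_snd) measurable_fst)

lemma conv_Ioi (ρ σ : Measure ℝ) [SFinite ρ] [SFinite σ] (x : ℝ) :
    (ρ.conv σ) (Ioi x) = (ρ.prod σ) (Aset x) := by
  rw [Measure.conv, Measure.map_apply (by fun_prop) measurableSet_Ioi]
  rfl

lemma up_bound (ρ σ : Measure ℝ) [SFinite ρ] [SFinite σ] (T x : ℝ) :
    (ρ.prod σ) (Aset x) ≤ (ρ.prod σ) (S1 T x) + (ρ.prod σ) (S2 T x) + (ρ.prod σ) (S3 T x) :=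
  le_trans (measure_mono (cover T x))
    (le_trans (measure_union_le _ _) (add_le_add_left (measure_union_le _ _) _))

lemma low_bound (ρ σ : Measure ℝ) [SFinite ρ] [SFinite σ] (T x : ℝ) (h : 2 * T ≤ x) :
    (ρ.prod σ) (S1 T x) + (ρ.prod σ) (S2 T x) ≤ (ρ.prod σ) (Aset x) := by
  rw [← measure_union (disj12 T x h) (measurable_S2 T x)]
  exact measure_mono (union_subset (S1_subset T x) (S2_subset T x))

lemma eq_triple (ρ σ : Measure ℝ) [SFinite ρ] [SFinite σ] (T x : ℝ) (h : 2 * T ≤ x) :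
    (ρ.prod σ) (Aset x)
      = (ρ.prod σ) (S1 T x) + (ρ.prod σ) (S2 T x) + (ρ.prod σ) (S3 T x) := by
  have hA : Aset x = (S1 T x ∪ S2 T x) ∪ S3 T x :=
    Subset.antisymm (cover T x)
      (union_subset (union_subset (S1_subset T x) (S2_subset T x)) (S3_subset T x))
  rw [hA, measure_union ((disj13 T x).union_left (disj23 T x)) (measurable_S3 T x),
    measure_union (disj12 T x h) (measurable_S2 T x)]

lemma comp_S3 (ν μ : Measure ℝ) [SFinite ν] [SFinite μ] (K : ℝ)
    (hKE : ∀ u : ℝ, ν (Ioi u) ≤ ENNReal.ofReal K * μ (Ioi u)) (T x : ℝ) :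
    (ν.prod μ) (S3 T x) ≤ ENNReal.ofReal K * (μ.prod μ) (S3 T x) := by
  rw [meas_S3, meas_S3]
  have hm : Measurable (fun y : ℝ => μ (Ioi (max T (x - y)))) :=
    (Antitone.measurable (fun _ _ hab => measure_mono (Ioi_subset_Ioi hab))).comp (by fun_prop)
  rw [← lintegral_const_mul _ hm]
  exact lintegral_mono fun y => hKE _

lemma toReal_section (ρ σ : Measure ℝ) [IsFiniteMeasure ρ] [IsFiniteMeasure σ]
    (s : Set ℝ) (u : ℝ → ℝ) (hu : Measurable u) :
    (∫⁻ y in s, ρ (Ioi (u y)) ∂σ).toReal = ∫ y in s, tail ρ (u y) ∂σ := by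
  rw [integral_eq_lintegral_of_nonneg_ae (ae_of_all _ fun y => tail_nonneg ρ _)
    (Measurable.aestronglyMeasurable ((measurable_tail ρ).comp hu))]
  congr 1
  apply lintegral_congr
  intro y
  rw [measure_Ioi_eq]

lemma key (μ ν : Measure ℝ) [IsProbabilityMeasure μ] [IsProbabilityMeasure ν] (γ : ℝ)
    (hγ : 0 ≤ γ) (hpos : ∀ x, 0 < tail μ x)
    (hL : ∀ k : ℝ, Tendsto (fun x => tail μ (x - k) / tail μ x) atTop (nhds (Real.exp (γ * k))))
    (hφμ : expMoment μ γ < ⊤)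
    (h2φ : Tendsto (fun x => tail (μ.conv μ) x / tail μ x) atTop
      (nhds (2 * (expMoment μ γ).toReal)))
    (c : ℝ)
    (hν : Tendsto (fun x => tail ν x / tail μ x) atTop (nhds c))
    (hφν : expMoment ν γ < ⊤) :
    Tendsto (fun x => tail (ν.conv μ) x / tail μ x) atTop
      (nhds (c * (expMoment μ γ).toReal + (expMoment ν γ).toReal)) := by
  have hc0 : 0 ≤ c :=
    ge_of_tendsto hν (Eventually.of_forall fun x => div_nonneg (tail_nonneg ν x) (tail_nonneg μ x))
  -- a pointwise domination constant
  obtain ⟨x₀, hx₀⟩ := eventually_atTop.mp (hν.eventually_lt_const (lt_add_one c))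
  set K : ℝ := max (c + 1) (1 / tail μ x₀) with hKdef
  have hK0 : 0 < K := lt_of_lt_of_le (div_pos one_pos (hpos x₀)) (le_max_right _ _)
  have hK : ∀ u, tail ν u ≤ K * tail μ u := by
    intro u
    rcases le_or_gt x₀ u with h | h
    · have := (div_lt_iff₀ (hpos u)).mp (hx₀ u h)
      calc tail ν u ≤ (c + 1) * tail μ u := this.le
        _ ≤ K * tail μ u := mul_le_mul_of_nonneg_right (le_max_left _ _) (tail_nonneg μ u)
    · have h1 : tail μ x₀ ≤ tail μ u := tail_antitone μ h.le
      have h2 : (1:ℝ) ≤ (1 / tail μ x₀) * tail μ u := by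
        rw [div_mul_eq_mul_div, one_mul, le_div_iff₀ (hpos x₀), one_mul]
        exact h1
      calc tail ν u ≤ 1 := tail_le_one ν u
        _ ≤ (1 / tail μ x₀) * tail μ u := h2
        _ ≤ K * tail μ u := mul_le_mul_of_nonneg_right (le_max_right _ _) (tail_nonneg μ u)
  have hKE : ∀ u : ℝ, ν (Ioi u) ≤ ENNReal.ofReal K * μ (Ioi u) := by
    intro u
    rw [measure_Ioi_eq, measure_Ioi_eq, ← ENNReal.ofReal_mul hK0.le]
    exact ENNReal.ofReal_le_ofReal (hK u)
  haveI := expM_finite μ γ hφμ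
  haveI := expM_finite ν γ hφν
  set φ : ℝ := (expMoment μ γ).toReal with hφdef
  set ψ : ℝ := (expMoment ν γ).toReal with hψdef
  rw [Metric.tendsto_nhds]
  intro ε hε
  -- choose the truncation level T
  have hδten : Tendsto (fun T : ℝ =>
      (c + 2 * K) * ((expM μ γ) (Ioi T)).toReal + ((expM ν γ) (Ioi T)).toReal) atTop (nhds 0) := by
    have := ((tendsto_expM_Ioi μ γ hφμ).const_mul (c + 2 * K)).add (tendsto_expM_Ioi ν γ hφν)
    simpa using this
  obtain ⟨T, hT⟩ := (hδten.eventually_lt_const (show (0:ℝ) < ε / 4 by linarith)).exists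
  set δ1 : ℝ := ((expM μ γ) (Ioi T)).toReal with hδ1def
  set δ2 : ℝ := ((expM ν γ) (Ioi T)).toReal with hδ2def
  have hδ1 : 0 ≤ δ1 := ENNReal.toReal_nonneg
  have hδ2 : 0 ≤ δ2 := ENNReal.toReal_nonneg
  -- truncated exponential integrals
  set Iμ : ℝ := ∫ y in Iic T, Real.exp (γ * y) ∂μ with hIμdef
  set Iν : ℝ := ∫ y in Iic T, Real.exp (γ * y) ∂ν with hIνdef
  have hIμ : Iμ = φ - δ1 := by
    have h1 := expM_Iic_add_Ioi μ γ T
    have h2 := congrArg ENNReal.toReal h1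
    rw [ENNReal.toReal_add (measure_ne_top _ _) (measure_ne_top _ _)] at h2
    rw [hIμdef, integral_Iic_exp]
    rw [hφdef, ← h2, hδ1def]
    ring
  have hIν : Iν = ψ - δ2 := by
    have h1 := expM_Iic_add_Ioi ν γ T
    have h2 := congrArg ENNReal.toReal h1
    rw [ENNReal.toReal_add (measure_ne_top _ _) (measure_ne_top _ _)] at h2
    rw [hIνdef, integral_Iic_exp]
    rw [hψdef, ← h2, hδ2def]
    ring
  -- the self-ratio tends to 1
  have hself : Tendsto (fun x => tail μ x / tail μ x) atTop (nhds 1) :=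
    tendsto_const_nhds.congr fun x => (div_self (ne_of_gt (hpos x))).symm
  -- the three dominated-convergence limits
  have l1 := dct μ γ hpos hL μ (tail ν) (tail_nonneg ν) (measurable_tail ν) c K hK hν T
  have l2 := dct μ γ hpos hL ν (tail μ) (tail_nonneg μ) (measurable_tail μ) 1 1
    (fun u => (one_mul _).symm.le) hself T
  have lb := dct μ γ hpos hL μ (tail μ) (tail_nonneg μ) (measurable_tail μ) 1 1
    (fun u => (one_mul _).symm.le) hself T
  -- eventual two-sided bounds
  have hup : ∀ x : ℝ, 2 * T ≤ x → tail (ν.conv μ) x ≤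
      (∫ y in Iic T, tail ν (x - y) ∂μ) + (∫ z in Iic T, tail μ (x - z) ∂ν)
        + K * (tail (μ.conv μ) x - 2 * (∫ y in Iic T, tail μ (x - y) ∂μ)) := by
    intro x hx
    have e1 : ((ν.prod μ) (S1 T x)).toReal = ∫ y in Iic T, tail ν (x - y) ∂μ := by
      rw [meas_S1, toReal_section ν μ _ _ (by fun_prop)]
    have e2 : ((ν.prod μ) (S2 T x)).toReal = ∫ z in Iic T, tail μ (x - z) ∂ν := by
      rw [meas_S2, toReal_section μ ν _ _ (by fun_prop)]
    have eb : ((μ.prod μ) (S1 T x)).toReal = ∫ y in Iic T, tail μ (x - y) ∂μ := by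
      rw [meas_S1, toReal_section μ μ _ _ (by fun_prop)]
    have eb2 : (μ.prod μ) (S2 T x) = (μ.prod μ) (S1 T x) := by rw [meas_S1, meas_S2]
    have etail : tail (ν.conv μ) x = ((ν.prod μ) (Aset x)).toReal := by rw [tail, conv_Ioi]
    have etail2 : tail (μ.conv μ) x = ((μ.prod μ) (Aset x)).toReal := by rw [tail, conv_Ioi]
    have step1 : (ν.prod μ) (Aset x) ≤ (ν.prod μ) (S1 T x) + (ν.prod μ) (S2 T x)
        + ENNReal.ofReal K * (μ.prod μ) (S3 T x) :=
      le_trans (up_bound ν μ T x) (add_le_add_right (comp_S3 ν μ K hKE T x) _)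
    have hne : (ν.prod μ) (S1 T x) + (ν.prod μ) (S2 T x)
        + ENNReal.ofReal K * (μ.prod μ) (S3 T x) ≠ ⊤ :=
      ENNReal.add_ne_top.mpr ⟨ENNReal.add_ne_top.mpr ⟨measure_ne_top _ _, measure_ne_top _ _⟩,
        ENNReal.mul_ne_top ENNReal.ofReal_ne_top (measure_ne_top _ _)⟩
    have step1' := ENNReal.toReal_mono hne step1
    rw [ENNReal.toReal_add (ENNReal.add_ne_top.mpr ⟨measure_ne_top _ _, measure_ne_top _ _⟩)
        (ENNReal.mul_ne_top ENNReal.ofReal_ne_top (measure_ne_top _ _)),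
      ENNReal.toReal_add (measure_ne_top _ _) (measure_ne_top _ _),
      ENNReal.toReal_mul, ENNReal.toReal_ofReal hK0.le] at step1'
    have trip := congrArg ENNReal.toReal (eq_triple μ μ T x hx)
    rw [ENNReal.toReal_add (ENNReal.add_ne_top.mpr ⟨measure_ne_top _ _, measure_ne_top _ _⟩)
        (measure_ne_top _ _),
      ENNReal.toReal_add (measure_ne_top _ _) (measure_ne_top _ _), eb2] at trip
    rw [etail, etail2]
    rw [e1, e2] at step1'
    rw [eb] at trip
    have hS3 : ((μ.prod μ) (S3 T x)).toReal
        = ((μ.prod μ) (Aset x)).toReal - 2 * (∫ y in Iic T, tail μ (x - y) ∂μ) := by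
      linarith [trip]
    rw [hS3] at step1'
    linarith [step1']
  have hlow : ∀ x : ℝ, 2 * T ≤ x →
      (∫ y in Iic T, tail ν (x - y) ∂μ) + (∫ z in Iic T, tail μ (x - z) ∂ν)
        ≤ tail (ν.conv μ) x := by
    intro x hx
    have e1 : ((ν.prod μ) (S1 T x)).toReal = ∫ y in Iic T, tail ν (x - y) ∂μ := by
      rw [meas_S1, toReal_section ν μ _ _ (by fun_prop)]
    have e2 : ((ν.prod μ) (S2 T x)).toReal = ∫ z in Iic T, tail μ (x - z) ∂ν := by
      rw [meas_S2, toReal_section μ ν _ _ (by fun_prop)]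
    have etail : tail (ν.conv μ) x = ((ν.prod μ) (Aset x)).toReal := by rw [tail, conv_Ioi]
    have step := ENNReal.toReal_mono (measure_ne_top _ _) (low_bound ν μ T x hx)
    rw [ENNReal.toReal_add (measure_ne_top _ _) (measure_ne_top _ _), e1, e2] at step
    rw [etail]
    exact step
  -- limit of the upper envelope
  have hU : Tendsto (fun x =>
      (∫ y in Iic T, tail ν (x - y) ∂μ) / tail μ x
        + (∫ z in Iic T, tail μ (x - z) ∂ν) / tail μ x
        + K * (tail (μ.conv μ) x / tail μ x
            - 2 * ((∫ y in Iic T, tail μ (x - y) ∂μ) / tail μ x))) atTop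
      (nhds (c * Iμ + 1 * Iν + K * (2 * φ - 2 * (1 * Iμ)))) := by
    exact (l1.add l2).add (((h2φ.sub (lb.const_mul 2)).const_mul K))
  have hLow : Tendsto (fun x =>
      (∫ y in Iic T, tail ν (x - y) ∂μ) / tail μ x
        + (∫ z in Iic T, tail μ (x - z) ∂ν) / tail μ x) atTop (nhds (c * Iμ + 1 * Iν)) :=
    l1.add l2
  have hUL : c * Iμ + 1 * Iν + K * (2 * φ - 2 * (1 * Iμ)) ≤ (c * φ + ψ) + ε / 4 := by
    rw [hIμ, hIν]
    have h1 : 0 ≤ c * δ1 := mul_nonneg hc0 hδ1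
    have h2 : 0 ≤ K * δ1 := mul_nonneg hK0.le hδ1
    nlinarith [hT]
  have hLL : (c * φ + ψ) - ε / 4 ≤ c * Iμ + 1 * Iν := by
    rw [hIμ, hIν]
    have h2 : 0 ≤ K * δ1 := mul_nonneg hK0.le hδ1
    nlinarith [hT]
  have ev1 := hU.eventually_lt_const (lt_add_of_pos_right _ (show (0:ℝ) < ε / 4 by linarith))
  have ev2 := hLow.eventually_const_lt
    (sub_lt_self _ (show (0:ℝ) < ε / 4 by linarith) :
      c * Iμ + 1 * Iν - ε / 4 < c * Iμ + 1 * Iν)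
  filter_upwards [ev1, ev2, eventually_ge_atTop (2 * T)] with x h1 h2 h3
  have hub : tail (ν.conv μ) x / tail μ x ≤
      (∫ y in Iic T, tail ν (x - y) ∂μ) / tail μ x
        + (∫ z in Iic T, tail μ (x - z) ∂ν) / tail μ x
        + K * (tail (μ.conv μ) x / tail μ x
            - 2 * ((∫ y in Iic T, tail μ (x - y) ∂μ) / tail μ x)) := by
    have hnum := hup x h3
    have hd : tail (ν.conv μ) x / tail μ x ≤
        ((∫ y in Iic T, tail ν (x - y) ∂μ) + (∫ z in Iic T, tail μ (x - z) ∂ν)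
          + K * (tail (μ.conv μ) x - 2 * (∫ y in Iic T, tail μ (x - y) ∂μ))) / tail μ x := by
      gcongr
      exact (hpos x).le
    refine hd.trans (le_of_eq ?_)
    ring
  have hlb : (∫ y in Iic T, tail ν (x - y) ∂μ) / tail μ x
        + (∫ z in Iic T, tail μ (x - z) ∂ν) / tail μ x ≤ tail (ν.conv μ) x / tail μ x := by
    have hnum := hlow x h3
    have hd : ((∫ y in Iic T, tail ν (x - y) ∂μ) + (∫ z in Iic T, tail μ (x - z) ∂ν)) / tail μ x
        ≤ tail (ν.conv μ) x / tail μ x := by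
      gcongr
      exact (hpos x).le
    refine le_trans (le_of_eq ?_) hd
    ring
  rw [Real.dist_eq, abs_sub_lt_iff]
  constructor <;> linarith

theorem memS_nconv_tail (μ : Measure ℝ) [IsProbabilityMeasure μ] (γ : ℝ)
    (hγ : 0 ≤ γ) (hS : MemS μ γ) :
    ∀ n : ℕ, 1 ≤ n →
      Tendsto (fun x => tail (nconv μ n) x / tail μ x) atTop
        (nhds (n * (expMoment μ γ).toReal ^ (n - 1))) := by
  obtain ⟨⟨hpos, hL⟩, hφμ, h2φ⟩ := hS
  have h2φ' : Tendsto (fun x => tail (μ.conv μ) x / tail μ x) atTop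
      (nhds (2 * (expMoment μ γ).toReal)) := by
    rw [← nconv_two]
    exact h2φ
  intro n hn
  induction n with
  | zero => omega
  | succ n ih =>
    by_cases hn0 : n = 0
    · subst hn0
      rw [nconv_one]
      have hself : Tendsto (fun x => tail μ x / tail μ x) atTop (nhds 1) :=
        tendsto_const_nhds.congr fun x => (div_self (ne_of_gt (hpos x))).symm
      simpa using hself
    · have hn1 : 1 ≤ n := Nat.one_le_iff_ne_zero.mpr hn0
      have IH := ih hn1
      have hφn : expMoment (nconv μ n) γ < ⊤ := by
        rw [expMoment_nconv]
        exact ENNReal.pow_lt_top hφμ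
      have hkey := key μ (nconv μ n) γ hγ hpos hL hφμ h2φ'
        ((n : ℝ) * (expMoment μ γ).toReal ^ (n - 1)) IH hφn
      have harith : ((n : ℝ) + 1) * (expMoment μ γ).toReal ^ n
          = (n : ℝ) * (expMoment μ γ).toReal ^ (n - 1) * (expMoment μ γ).toReal
            + (expMoment (nconv μ n) γ).toReal := by
        rw [expMoment_nconv, ENNReal.toReal_pow]
        have hpow : (expMoment μ γ).toReal ^ (n - 1) * (expMoment μ γ).toReal
            = (expMoment μ γ).toReal ^ n := by
          rw [← pow_succ, show n - 1 + 1 = n from by omega]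
        rw [mul_assoc, hpow]
        ring
      show Tendsto (fun x => tail ((nconv μ n).conv μ) x / tail μ x) atTop
        (nhds (((n : ℕ) + 1 : ℕ) * (expMoment μ γ).toReal ^ (n + 1 - 1)))
      have : (((n : ℕ) + 1 : ℕ) : ℝ) * (expMoment μ γ).toReal ^ (n + 1 - 1)
          = ((n : ℝ) + 1) * (expMoment μ γ).toReal ^ n := by
        push_cast
        ring
      rw [this, harith]
      exact hkey
end
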